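/- Let q ≥ 1 be an integer and let f : ℝ → ℂ be differentiable at every point of [0,1] with derivative f' interval-integrable on [0,1], and with f(0) = f(1). For integers s with 1 ≤ s ≤ q-1 define c(s,q) := -(1/(2πi))·(1/s - 2s·∑_{m=1}^{∞} 1/(m²q² - s²)) and Ψ_s(u) := c(s,q) - (1/q)·(1/2 + ∑_{ℓ=1}^{⌊qu⌋} e^{2πiℓs/q}) for u ∈ (0,1]; define Ψ_0(u) := (1/q)·(qu - ⌊qu⌋ - 1/2). Then for every integer a with 1 ≤ a ≤ q: f(a/q) = (∫_0^1 f(u) du + ∫_0^1 Ψ_0(u) f'(u) du) + ∑_{s=1}^{q-1} e^{-2πisa/q} ∫_0^1 Ψ_s(u) f'(u) du. In particular f(a/q) = ∑_{r=0}^{q-1} b_r e^{2πira/q}, a finite Fourier series modulo q whose coefficients b_0 := ∫_0^1 f + ∫_0^1 Ψ_0 f' and b_r := ∫_0^1 Ψ_{q-r}(u) f'(u) du (for 1 ≤ r ≤ q-1) do not depend on a. -/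

import Mathlib

open MeasureTheory intervalIntegral

lemma aux_telescope (ζ : ℂ) (F : ℕ → ℂ) (n : ℕ) :
    ∑ k ∈ Finset.range n, (∑ j ∈ Finset.range k, ζ^(j+1)) * (F (k+1) - F k)
      = (∑ j ∈ Finset.range n, ζ^(j+1)) * F n - ∑ k ∈ Finset.range n, ζ^(k+1) * F (k+1) := by
  induction n with
  | zero => simp
  | succ n ih =>
    rw [Finset.sum_range_succ, ih, Finset.sum_range_succ (fun j => ζ^(j+1)),
      Finset.sum_range_succ (fun k => ζ^(k+1) * F (k+1))]
    ring

lemma aux_Icc_sum (k : ℕ) (g : ℤ → ℂ) :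
    ∑ ℓ ∈ Finset.Icc (1:ℤ) (k:ℤ), g ℓ = ∑ j ∈ Finset.range k, g (j+1) := by
  induction k with
  | zero => simp
  | succ k ih =>
    have h : Finset.Icc (1:ℤ) ((k:ℕ)+1 : ℕ) = insert ((k:ℤ)+1) (Finset.Icc (1:ℤ) (k:ℤ)) := by
      ext x; simp only [Finset.mem_Icc, Finset.mem_insert]; push_cast; omega
    rw [h, Finset.sum_insert (by simp), ih, Finset.sum_range_succ]
    push_cast
    ring

lemma aux_orth (q : ℕ) (hq : 1 ≤ q) (m : ℤ) :
    ∑ s ∈ Finset.range q, Complex.exp (2*Real.pi*Complex.I*s*m/q)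
      = if (q:ℤ) ∣ m then (q:ℂ) else 0 := by
  have hq0 : (q:ℂ) ≠ 0 := Nat.cast_ne_zero.mpr (by omega)
  set w : ℂ := Complex.exp (2*Real.pi*Complex.I*m/q) with hw
  have hexp : ∀ s : ℕ, Complex.exp (2*Real.pi*Complex.I*s*m/q) = w^s := by
    intro s
    rw [hw, ← Complex.exp_nat_mul]
    ring_nf
  have hpow : w^q = 1 := by
    rw [hw, ← Complex.exp_nat_mul]
    have : (q:ℂ) * (2*Real.pi*Complex.I*m/q) = m * (2*Real.pi*Complex.I) := by
      field_simp
    rw [this, Complex.exp_int_mul_two_pi_mul_I]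
  simp only [hexp]
  by_cases hdvd : (q:ℤ) ∣ m
  · obtain ⟨t, ht⟩ := hdvd
    have h1 : w = 1 := by
      rw [hw]
      have : (2*(Real.pi:ℂ)*Complex.I*m/q) = (t:ℤ) * (2*Real.pi*Complex.I) := by
        rw [ht]; push_cast; field_simp
      rw [this, Complex.exp_int_mul_two_pi_mul_I]
    rw [if_pos ⟨t, ht⟩]
    simp [h1]
  · have hne : w ≠ 1 := by
      intro h
      rw [hw, Complex.exp_eq_one_iff] at h
      obtain ⟨n, hn⟩ := h
      apply hdvd
      have h2 : (2*(Real.pi:ℂ)*Complex.I) ≠ 0 := by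
        simp [Real.pi_ne_zero, Complex.I_ne_zero, Complex.ofReal_ne_zero]
      have h3 : (m:ℂ) = n * q := by
        field_simp at hn
        have h4 : (m:ℂ) * (2*(Real.pi:ℂ)*Complex.I) = (n*q) * (2*(Real.pi:ℂ)*Complex.I) := by
          linear_combination (2*(Real.pi:ℂ)*Complex.I) * hn
        exact mul_right_cancel₀ h2 h4
      have h5 : m = n * q := by exact_mod_cast h3
      exact ⟨n, by rw [h5]; ring⟩
    rw [geom_sum_eq hne, hpow, if_neg hdvd]
    simp

lemma aux_range_eq_insert (q : ℕ) (hq : 1 ≤ q) :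
    Finset.range q = insert 0 (Finset.Icc 1 (q-1)) := by
  ext x; simp only [Finset.mem_range, Finset.mem_Icc, Finset.mem_insert]; omega

/-- Theorem 2 of the paper (finite Fourier series modulo `q`): for `f` differentiable
on `[0,1]` with integrable derivative and `f(0) = f(1)`, and with
`c(s,q) = -(1/(2πi))(1/s - 2s ∑_{m≥1} 1/(m²q²-s²))`,
`Ψ_s(u) = c(s,q) - (1/q)(1/2 + ∑_{ℓ=1}^{⌊qu⌋} e^{2πiℓs/q})` on `(0,1]` for
`1 ≤ s ≤ q-1`, and `Ψ_0(u) = (1/q)(qu - ⌊qu⌋ - 1/2)`, one has for every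
`1 ≤ a ≤ q` that
`f(a/q) = (∫_0^1 f + ∫_0^1 Ψ_0 f') + ∑_{s=1}^{q-1} e^{-2πisa/q} ∫_0^1 Ψ_s f'`,
i.e. `f(a/q) = ∑_{r=0}^{q-1} b_r e^{2πira/q}` with coefficients `b_0 = ∫_0^1 f + ∫_0^1 Ψ_0 f'`
and `b_r = ∫_0^1 Ψ_{q-r} f'` (for `1 ≤ r ≤ q-1`) not depending on `a`. -/
theorem fourier_theorem2_finite (q : ℕ) (hq : 1 ≤ q)
    (f f' : ℝ → ℂ)
    (hdiff : ∀ x ∈ Set.Icc (0 : ℝ) 1, HasDerivAt f (f' x) x)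
    (hint : IntervalIntegrable f' volume 0 1)
    (hper : f 0 = f 1)
    (cc : ℕ → ℂ)
    (hcc : ∀ s : ℕ, 1 ≤ s → s ≤ q - 1 →
      cc s = -(1 / (2 * Real.pi * Complex.I)) *
        ((1 / (s : ℂ)) - 2 * (s : ℂ) *
          ∑' m : ℕ+, (1 : ℂ) / ((m : ℂ) ^ 2 * (q : ℂ) ^ 2 - (s : ℂ) ^ 2)))
    (Ψ : ℕ → ℝ → ℂ)
    (hΨ0 : ∀ u : ℝ, Ψ 0 u =
      (((1 / (q : ℝ)) * ((q : ℝ) * u - ⌊(q : ℝ) * u⌋ - 1 / 2) : ℝ) : ℂ))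
    (hΨ : ∀ s : ℕ, 1 ≤ s → s ≤ q - 1 → ∀ u ∈ Set.Ioc (0 : ℝ) 1,
      Ψ s u = cc s - (1 / (q : ℂ)) * (1 / 2 +
        ∑ ℓ ∈ Finset.Icc (1 : ℤ) ⌊(q : ℝ) * u⌋,
          Complex.exp (2 * Real.pi * Complex.I * ℓ * s / q)))
    (b : ℕ → ℂ)
    (hb0 : b 0 = (∫ u in (0:ℝ)..1, f u) + ∫ u in (0:ℝ)..1, Ψ 0 u * f' u)
    (hb : ∀ r : ℕ, 1 ≤ r → r ≤ q - 1 →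
      b r = ∫ u in (0:ℝ)..1, Ψ (q - r) u * f' u) :
    ∀ a : ℕ, 1 ≤ a → a ≤ q →
      f ((a : ℝ) / q) =
          ((∫ u in (0:ℝ)..1, f u) + ∫ u in (0:ℝ)..1, Ψ 0 u * f' u)
            + ∑ s ∈ Finset.Icc 1 (q - 1),
                Complex.exp (-(2 * Real.pi * Complex.I * s * a / q)) *
                  ∫ u in (0:ℝ)..1, Ψ s u * f' u
        ∧ f ((a : ℝ) / q) =
            ∑ r ∈ Finset.range q, b r * Complex.exp (2 * Real.pi * Complex.I * r * a / q) := by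
  have hq0R : (0:ℝ) < q := by exact_mod_cast Nat.pos_of_ne_zero (by omega)
  have hqC : (q:ℂ) ≠ 0 := Nat.cast_ne_zero.mpr (by omega)
  set x : ℕ → ℝ := fun k => (k:ℝ)/q with hxdef
  have hx0 : x 0 = 0 := by simp [hxdef]
  have hxq : x q = 1 := by simp only [hxdef]; exact div_self hq0R.ne'
  have hxmem : ∀ k, k ≤ q → x k ∈ Set.Icc (0:ℝ) 1 := by
    intro k hk
    constructor
    · positivity
    · rw [hxdef]
      rw [div_le_one hq0R]
      exact_mod_cast hk
  have hxlt : ∀ k : ℕ, x k < x (k+1) := by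
    intro k
    simp only [hxdef]
    have h : (k:ℝ) < ((k+1:ℕ):ℝ) := by push_cast; linarith
    exact (div_lt_div_iff_of_pos_right hq0R).mpr h
-- infrastructure
  have hsub : ∀ k, k < q → Set.uIcc (x k) (x (k+1)) ⊆ Set.Icc (0:ℝ) 1 := by
    intro k hk
    rw [Set.uIcc_of_le (hxlt k).le]
    exact Set.Icc_subset_Icc (hxmem k (by omega)).1 (hxmem (k+1) (by omega)).2
  have hint_sub : ∀ k, k < q → IntervalIntegrable f' volume (x k) (x (k+1)) := by
    intro k hk
    apply hint.mono_set
    rw [Set.uIcc_of_le (zero_le_one' ℝ)]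
    exact hsub k hk
  have hFTC : ∀ k, k < q → ∫ u in x k..x (k+1), f' u = f (x (k+1)) - f (x k) := by
    intro k hk
    exact integral_eq_sub_of_hasDerivAt (fun u hu => hdiff u (hsub k hk hu)) (hint_sub k hk)
  have hfc : ContinuousOn f (Set.Icc (0:ℝ) 1) :=
    fun u hu => (hdiff u hu).continuousAt.continuousWithinAt
  have hfint_sub : ∀ k, k < q → IntervalIntegrable f volume (x k) (x (k+1)) := by
    intro k hk
    exact ((hfc.mono (hsub k hk)).intervalIntegrable)
  have hae : ∀ (g h : ℝ → ℂ) (k : ℕ), (∀ u ∈ Set.Ioo (x k) (x (k+1)), g u = h u) →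
      ∀ᵐ u ∂(volume : Measure ℝ), u ∈ Set.uIoc (x k) (x (k+1)) → g u = h u := by
    intro g h k hgh
    have h0 : (volume : Measure ℝ) {x (k+1)} = 0 := Real.volume_singleton
    filter_upwards [compl_mem_ae_iff.mpr h0] with u hu hmem
    rw [Set.uIoc_of_le (hxlt k).le] at hmem
    exact hgh u ⟨hmem.1, lt_of_le_of_ne hmem.2 (by simpa using hu)⟩
  have hfloor : ∀ k, k < q → ∀ u ∈ Set.Ioo (x k) (x (k+1)), ⌊(q:ℝ)*u⌋ = (k:ℤ) := by
    intro k hk u hu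
    have h1 : (k:ℝ) < q*u := by
      have h := hu.1
      simp only [hxdef] at h
      have h2 := (div_lt_iff₀ hq0R).mp h
      linarith [h2]
    have h2 : q*u < (k:ℝ)+1 := by
      have h := hu.2
      simp only [hxdef] at h
      have h3 := (lt_div_iff₀ hq0R).mp h
      push_cast at h3
      linarith [h3]
    rw [Int.floor_eq_iff]
    constructor
    · push_cast; linarith
    · push_cast; linarith
  have hIoc01 : ∀ k, k < q → ∀ u ∈ Set.Ioo (x k) (x (k+1)), u ∈ Set.Ioc (0:ℝ) 1 := by
    intro k hk u hu
    exact ⟨lt_of_le_of_lt (hxmem k (by omega)).1 hu.1,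
      le_trans hu.2.le (hxmem (k+1) (by omega)).2⟩
  set ζ : ℕ → ℂ := fun s => Complex.exp (2*Real.pi*Complex.I*s/q) with hζdef
  have hζpow : ∀ s j : ℕ, (ζ s)^j = Complex.exp (2*Real.pi*Complex.I*(j:ℤ)*((s:ℤ))/q) := by
    intro s j
    simp only [hζdef]
    rw [← Complex.exp_nat_mul]
    congr 1
    push_cast
    ring
  -- value of Psi0 on open subintervals
  have hG : ∀ k, k < q → ∀ u ∈ Set.Ioo (x k) (x (k+1)),
      Ψ 0 u = (1/(q:ℂ))*((q:ℂ)*u - k - 1/2) := by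
    intro k hk u hu
    rw [hΨ0 u, hfloor k hk u hu]
    push_cast
    ring
  -- the Psi0 integral identity
  have hI0 : (∫ u in (0:ℝ)..1, f u) + (∫ u in (0:ℝ)..1, Ψ 0 u * f' u)
      = (1/(q:ℂ)) * ∑ k ∈ Finset.range q, f (x (k+1)) := by
    have hGc : ∀ k : ℕ, ContinuousOn (fun u : ℝ => (1/(q:ℂ))*((q:ℂ)*u - k - 1/2))
        (Set.uIcc (x k) (x (k+1))) := by
      intro k
      apply Continuous.continuousOn
      fun_prop
    have hGone : ∀ k : ℕ, ∀ u : ℝ,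
        HasDerivAt (fun u : ℝ => (1/(q:ℂ))*((q:ℂ)*u - k - 1/2)) 1 u := by
      intro k u
      have h1 : HasDerivAt (fun u : ℝ => (u:ℂ)) 1 u := by
        exact Complex.ofRealCLM.hasDerivAt (x := u)
      have h2 := (((h1.const_mul ((q:ℂ))).sub_const ((k:ℂ))).sub_const ((1:ℂ)/2)).const_mul
        ((1:ℂ)/(q:ℂ))
      have h3 : (1/(q:ℂ)) * ((q:ℂ)*1) = 1 := by field_simp
      simpa only [h3] using h2
    have hk1 : ∀ k, k < q → (∫ u in x k..x (k+1), Ψ 0 u * f' u)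
        = (1/(2*(q:ℂ)))*(f (x (k+1)) + f (x k)) - ∫ u in x k..x (k+1), f u := by
      intro k hk
      set G : ℝ → ℂ := fun u => (1/(q:ℂ))*((q:ℂ)*u - k - 1/2) with hGdef
      have hprod : ∀ u ∈ Set.uIcc (x k) (x (k+1)),
          HasDerivAt (fun u => G u * f u) (1 * f u + G u * f' u) u :=
        fun u hu => (hGone k u).mul (hdiff u (hsub k hk hu))
      have hGf' : IntervalIntegrable (fun u => G u * f' u) volume (x k) (x (k+1)) :=
        (hint_sub k hk).continuousOn_mul (hGc k)
      have h1f : IntervalIntegrable (fun u => 1 * f u) volume (x k) (x (k+1)) := by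
        simpa using hfint_sub k hk
      have hii : IntervalIntegrable (fun u => 1 * f u + G u * f' u) volume (x k) (x (k+1)) :=
        h1f.add hGf'
      have hFTC2 := integral_eq_sub_of_hasDerivAt hprod hii
      rw [intervalIntegral.integral_add h1f hGf'] at hFTC2
      have hGa : G (x k) = -(1/(2*(q:ℂ))) := by
        simp only [hGdef, hxdef]
        push_cast
        field_simp
        ring
      have hGb : G (x (k+1)) = 1/(2*(q:ℂ)) := by
        simp only [hGdef, hxdef]
        push_cast
        field_simp
        ring
      have hcongr : (∫ u in x k..x (k+1), Ψ 0 u * f' u) = ∫ u in x k..x (k+1), G u * f' u := by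
        apply intervalIntegral.integral_congr_ae
        exact hae _ _ k (fun u hu => by rw [hG k hk u hu])
      rw [hcongr]
      have hsimp : (∫ u in x k..x (k+1), 1 * f u) = ∫ u in x k..x (k+1), f u := by
        simp
      rw [hsimp] at hFTC2
      rw [hGa, hGb] at hFTC2
      linear_combination hFTC2
    have hGc2 : ∀ k : ℕ, ContinuousOn (fun u : ℝ => (1/(q:ℂ))*((q:ℂ)*u - k - 1/2))
        (Set.Icc (x k) (x (k+1))) := fun k => (hGc k).mono (by rw [Set.uIcc_of_le (hxlt k).le])
    have hkii : ∀ k, k < q →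
        IntervalIntegrable (fun u => Ψ 0 u * f' u) volume (x k) (x (k+1)) := by
      intro k hk
      have hGf' : IntervalIntegrable (fun u => (1/(q:ℂ))*((q:ℂ)*u - k - 1/2) * f' u)
          volume (x k) (x (k+1)) := (hint_sub k hk).continuousOn_mul (hGc k)
      rw [intervalIntegrable_iff] at hGf' ⊢
      apply hGf'.congr
      exact (ae_restrict_iff' measurableSet_uIoc).mpr
        (hae _ _ k (fun u hu => by rw [hG k hk u hu]))
    have hsplit0 : (∫ u in (0:ℝ)..1, Ψ 0 u * f' u)
        = ∑ k ∈ Finset.range q, ∫ u in x k..x (k+1), Ψ 0 u * f' u := by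
      have h := intervalIntegral.sum_integral_adjacent_intervals
        (a := x) (n := q) (fun k hk => hkii k hk)
      rw [hx0, hxq] at h
      exact h.symm
    have hsplitf : (∫ u in (0:ℝ)..1, f u)
        = ∑ k ∈ Finset.range q, ∫ u in x k..x (k+1), f u := by
      have h := intervalIntegral.sum_integral_adjacent_intervals
        (a := x) (n := q) (fun k hk => hfint_sub k hk)
      rw [hx0, hxq] at h
      exact h.symm
    have hshift : ∑ k ∈ Finset.range q, f (x k) = ∑ k ∈ Finset.range q, f (x (k+1)) := by
      have h1 : ∑ k ∈ Finset.range q, (f (x (k+1)) - f (x k)) = f (x q) - f (x 0) :=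
        Finset.sum_range_sub (fun k => f (x k)) q
      rw [Finset.sum_sub_distrib] at h1
      have h2 : f (x q) - f (x 0) = 0 := by rw [hx0, hxq, hper]; exact sub_self _
      rw [h2] at h1
      exact (sub_eq_zero.mp h1).symm
    rw [hsplit0, hsplitf, Finset.sum_congr rfl (fun k hk => hk1 k (Finset.mem_range.mp hk)),
      Finset.sum_sub_distrib]
    have h3 : ∑ k ∈ Finset.range q, (1/(2*(q:ℂ)))*(f (x (k+1)) + f (x k))
        = (1/(q:ℂ)) * ∑ k ∈ Finset.range q, f (x (k+1)) := by
      rw [← Finset.mul_sum, Finset.sum_add_distrib, hshift]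
      have : ∀ S : ℂ, (1/(2*(q:ℂ)))*(S + S) = (1/(q:ℂ))*S := by
        intro S
        by_cases h : (q:ℂ) = 0
        · simp [h]
        · field_simp
          ring
      exact this _
    rw [h3]
    ring
  -- step values of Psi_s
  have hstep : ∀ s, 1 ≤ s → s ≤ q-1 → ∀ k, k < q → ∀ u ∈ Set.Ioo (x k) (x (k+1)),
      Ψ s u = cc s - (1/(q:ℂ))*(1/2 + ∑ j ∈ Finset.range k, (ζ s)^(j+1)) := by
    intro s hs1 hs2 k hk u hu
    rw [hΨ s hs1 hs2 u (hIoc01 k hk u hu), hfloor k hk u hu, aux_Icc_sum]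
    have hsum : ∑ j ∈ Finset.range k,
        Complex.exp (2*Real.pi*Complex.I*(((j:ℤ)+1):ℤ)*s/q) = ∑ j ∈ Finset.range k, (ζ s)^(j+1) := by
      apply Finset.sum_congr rfl
      intro j _
      rw [hζpow s (j+1)]
      norm_cast
    rw [hsum]
  have hTq : ∀ s, 1 ≤ s → s ≤ q-1 → ∑ j ∈ Finset.range q, (ζ s)^(j+1) = 0 := by
    intro s hs1 hs2
    have hq1 : (0:ℤ) < (q:ℤ) := by exact_mod_cast (by omega : 0 < q)
    have hs1' : (1:ℤ) ≤ (s:ℤ) := by exact_mod_cast hs1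
    have hs2' : (s:ℤ) ≤ (q:ℤ) - 1 := by
      have : (s:ℤ) ≤ ((q-1 : ℕ) : ℤ) := by exact_mod_cast hs2
      omega
    have hnd : ¬ ((q:ℤ) ∣ (s:ℤ)) := by
      rintro ⟨t, ht⟩
      rcases le_or_gt t 0 with h | h
      · nlinarith
      · have h1 : (1:ℤ) ≤ t := h
        nlinarith
    have horth := aux_orth q hq (s:ℤ)
    rw [if_neg hnd] at horth
    have h1 : ∑ j ∈ Finset.range q, (ζ s)^j = 0 := by
      rw [← horth]
      apply Finset.sum_congr rfl
      intro j _
      rw [hζpow s j]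
      norm_cast
    calc ∑ j ∈ Finset.range q, (ζ s)^(j+1)
        = (∑ j ∈ Finset.range q, (ζ s)^j) * ζ s := by
          rw [Finset.sum_mul]
          apply Finset.sum_congr rfl
          intro j _
          ring
      _ = 0 := by rw [h1, zero_mul]
  have hΔ : ∑ k ∈ Finset.range q, (f (x (k+1)) - f (x k)) = 0 := by
    rw [Finset.sum_range_sub (fun k => f (x k)) q, hx0, hxq, hper]
    exact sub_self _
  -- the Psi_s integral identity
  have hIs : ∀ s, 1 ≤ s → s ≤ q-1 →
      (∫ u in (0:ℝ)..1, Ψ s u * f' u)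
        = (1/(q:ℂ)) * ∑ k ∈ Finset.range q, (ζ s)^(k+1) * f (x (k+1)) := by
    intro s hs1 hs2
    set C : ℕ → ℂ := fun k => cc s - (1/(q:ℂ))*(1/2 + ∑ j ∈ Finset.range k, (ζ s)^(j+1)) with hC
    have hkii : ∀ k, k < q →
        IntervalIntegrable (fun u => Ψ s u * f' u) volume (x k) (x (k+1)) := by
      intro k hk
      have h1 : IntervalIntegrable (fun u => C k * f' u) volume (x k) (x (k+1)) :=
        (hint_sub k hk).const_mul (C k)
      rw [intervalIntegrable_iff] at h1 ⊢
      apply h1.congr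
      exact (ae_restrict_iff' measurableSet_uIoc).mpr
        (hae _ _ k (fun u hu => by simp only [hC]; rw [hstep s hs1 hs2 k hk u hu]))
    have hkint : ∀ k, k < q → (∫ u in x k..x (k+1), Ψ s u * f' u)
        = C k * (f (x (k+1)) - f (x k)) := by
      intro k hk
      have hcongr : (∫ u in x k..x (k+1), Ψ s u * f' u)
          = ∫ u in x k..x (k+1), C k * f' u := by
        apply intervalIntegral.integral_congr_ae
        exact hae _ _ k (fun u hu => by simp only [hC]; rw [hstep s hs1 hs2 k hk u hu])
      rw [hcongr, intervalIntegral.integral_const_mul, hFTC k hk]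
    have hsplit : (∫ u in (0:ℝ)..1, Ψ s u * f' u)
        = ∑ k ∈ Finset.range q, ∫ u in x k..x (k+1), Ψ s u * f' u := by
      have h := intervalIntegral.sum_integral_adjacent_intervals
        (a := x) (n := q) (fun k hk => hkii k hk)
      rw [hx0, hxq] at h
      exact h.symm
    rw [hsplit, Finset.sum_congr rfl (fun k hk => hkint k (Finset.mem_range.mp hk))]
    simp only [hC]
    have hexp2 : ∀ k : ℕ,
        (cc s - (1/(q:ℂ))*(1/2 + ∑ j ∈ Finset.range k, (ζ s)^(j+1))) * (f (x (k+1)) - f (x k))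
          = (cc s - (1/(q:ℂ))*(1/2)) * (f (x (k+1)) - f (x k))
            - (1/(q:ℂ)) * ((∑ j ∈ Finset.range k, (ζ s)^(j+1)) * (f (x (k+1)) - f (x k))) := by
      intro k
      ring
    rw [Finset.sum_congr rfl (fun k _ => hexp2 k), Finset.sum_sub_distrib,
      ← Finset.mul_sum, ← Finset.mul_sum,
      aux_telescope (ζ s) (fun k => f (x k)) q, hTq s hs1 hs2, hΔ]
    ring
  -- final assembly
  intro a ha1 ha2
  have hiff : ∀ k, k < q → (((q:ℤ) ∣ ((k:ℤ)+1-(a:ℤ))) ↔ (k = a-1)) := by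
    intro k hk
    constructor
    · rintro ⟨t, ht⟩
      have hk' : (k:ℤ) < (q:ℤ) := by exact_mod_cast hk
      have ha1' : (1:ℤ) ≤ (a:ℤ) := by exact_mod_cast ha1
      have ha2' : (a:ℤ) ≤ (q:ℤ) := by exact_mod_cast ha2
      have hq' : (1:ℤ) ≤ (q:ℤ) := by exact_mod_cast hq
      have ht0 : t = 0 := by
        rcases lt_trichotomy t 0 with h | h | h
        · have h1 : t ≤ -1 := by omega
          nlinarith
        · exact h
        · have h1 : 1 ≤ t := h
          nlinarith
      rw [ht0, mul_zero] at ht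
      omega
    · intro h
      refine ⟨0, ?_⟩
      rw [mul_zero]
      omega
  have hEsum : ∀ k, k < q →
      (1 + ∑ s ∈ Finset.Icc 1 (q-1),
        Complex.exp (-(2*Real.pi*Complex.I*s*a/q)) * (ζ s)^(k+1))
        = if k = a - 1 then (q:ℂ) else 0 := by
    intro k hk
    have horth := aux_orth q hq ((k:ℤ)+1-(a:ℤ))
    rw [aux_range_eq_insert q hq, Finset.sum_insert (by simp)] at horth
    simp only [Nat.cast_zero, mul_zero, zero_mul, zero_div, Complex.exp_zero] at horth
    have hterm : ∀ s ∈ Finset.Icc 1 (q-1),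
        Complex.exp (-(2*Real.pi*Complex.I*s*a/q)) * (ζ s)^(k+1)
          = Complex.exp (2*Real.pi*Complex.I*s*(((k:ℤ)+1-(a:ℤ)):ℤ)/q) := by
      intro s _
      rw [hζpow s (k+1), ← Complex.exp_add]
      congr 1
      push_cast
      field_simp
      ring
    rw [Finset.sum_congr rfl hterm, horth, if_congr (hiff k hk) rfl rfl]
  have hmain : (1/(q:ℂ)) * (∑ k ∈ Finset.range q, f (x (k+1)))
      + ∑ s ∈ Finset.Icc 1 (q-1), Complex.exp (-(2*Real.pi*Complex.I*s*a/q))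
          * ((1/(q:ℂ)) * ∑ k ∈ Finset.range q, (ζ s)^(k+1) * f (x (k+1)))
      = f ((a:ℝ)/q) := by
    have expand : ∑ k ∈ Finset.range q,
        (1 + ∑ s ∈ Finset.Icc 1 (q-1),
          Complex.exp (-(2*Real.pi*Complex.I*s*a/q)) * (ζ s)^(k+1)) * f (x (k+1))
        = ∑ k ∈ Finset.range q, f (x (k+1))
          + ∑ s ∈ Finset.Icc 1 (q-1), Complex.exp (-(2*Real.pi*Complex.I*s*a/q))
              * ∑ k ∈ Finset.range q, (ζ s)^(k+1) * f (x (k+1)) := by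
      simp only [add_mul, one_mul, Finset.sum_add_distrib, Finset.sum_mul]
      congr 1
      rw [Finset.sum_comm]
      apply Finset.sum_congr rfl
      intro s _
      rw [Finset.mul_sum]
      apply Finset.sum_congr rfl
      intro k _
      ring
    have pull : ∑ s ∈ Finset.Icc 1 (q-1), Complex.exp (-(2*Real.pi*Complex.I*s*a/q))
        * ((1/(q:ℂ)) * ∑ k ∈ Finset.range q, (ζ s)^(k+1) * f (x (k+1)))
        = (1/(q:ℂ)) * ∑ s ∈ Finset.Icc 1 (q-1), Complex.exp (-(2*Real.pi*Complex.I*s*a/q))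
            * ∑ k ∈ Finset.range q, (ζ s)^(k+1) * f (x (k+1)) := by
      rw [Finset.mul_sum]
      apply Finset.sum_congr rfl
      intro s _
      ring
    have hE2 : ∑ k ∈ Finset.range q,
        (1 + ∑ s ∈ Finset.Icc 1 (q-1),
          Complex.exp (-(2*Real.pi*Complex.I*s*a/q)) * (ζ s)^(k+1)) * f (x (k+1))
        = ∑ k ∈ Finset.range q, (if k = a-1 then (q:ℂ) else 0) * f (x (k+1)) :=
      Finset.sum_congr rfl (fun k hk => by rw [hEsum k (Finset.mem_range.mp hk)])
    have hite : ∑ k ∈ Finset.range q, (if k = a-1 then (q:ℂ) else 0) * f (x (k+1))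
        = ∑ k ∈ Finset.range q, (if k = a-1 then (q:ℂ) * f (x (k+1)) else 0) := by
      apply Finset.sum_congr rfl
      intro k _
      rw [ite_mul, zero_mul]
    rw [pull, ← mul_add, ← expand, hE2, hite,
      Finset.sum_ite_eq' (Finset.range q) (a-1) (fun k => (q:ℂ) * f (x (k+1))),
      if_pos (Finset.mem_range.mpr (by omega : a - 1 < q))]
    have haa : a - 1 + 1 = a := by omega
    rw [haa]
    have hxa : f (x a) = f ((a:ℝ)/q) := by simp only [hxdef]
    rw [← hxa]
    field_simp
  constructor
  · have hsum1 : ∑ s ∈ Finset.Icc 1 (q-1),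
        Complex.exp (-(2*Real.pi*Complex.I*s*a/q)) * ∫ u in (0:ℝ)..1, Ψ s u * f' u
        = ∑ s ∈ Finset.Icc 1 (q-1), Complex.exp (-(2*Real.pi*Complex.I*s*a/q))
            * ((1/(q:ℂ)) * ∑ k ∈ Finset.range q, (ζ s)^(k+1) * f (x (k+1))) := by
      apply Finset.sum_congr rfl
      intro s hs
      rw [hIs s (Finset.mem_Icc.mp hs).1 (Finset.mem_Icc.mp hs).2]
    rw [hI0, hsum1]
    exact hmain.symm
  · rw [aux_range_eq_insert q hq, Finset.sum_insert (by simp)]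
    have h0term : b 0 * Complex.exp (2*Real.pi*Complex.I*((0:ℕ):ℂ)*a/q) = b 0 := by
      norm_num
    have hrterm : ∀ r ∈ Finset.Icc 1 (q-1),
        b r * Complex.exp (2*Real.pi*Complex.I*r*a/q)
          = Complex.exp (-(2*Real.pi*Complex.I*((q-r : ℕ):ℂ)*a/q))
              * ((1/(q:ℂ)) * ∑ k ∈ Finset.range q, (ζ (q-r))^(k+1) * f (x (k+1))) := by
      intro r hr
      obtain ⟨hr1, hr2⟩ := Finset.mem_Icc.mp hr
      rw [hb r hr1 hr2, hIs (q-r) (by omega) (by omega)]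
      have hxp : Complex.exp (2*Real.pi*Complex.I*r*a/q)
          = Complex.exp (-(2*Real.pi*Complex.I*((q-r : ℕ):ℂ)*a/q)) := by
        have hcast : ((q-r : ℕ):ℂ) = (q:ℂ) - r := by
          push_cast [Nat.cast_sub (by omega : r ≤ q)]
          ring
        have harg : (2*(Real.pi:ℂ)*Complex.I*r*a/q)
            = -(2*Real.pi*Complex.I*((q-r : ℕ):ℂ)*a/q) + (a:ℤ)*(2*Real.pi*Complex.I) := by
          rw [hcast]
          field_simp
          push_cast
          ring
        rw [harg, Complex.exp_add, Complex.exp_int_mul_two_pi_mul_I, mul_one]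
      rw [hxp]
      ring
    rw [h0term, Finset.sum_congr rfl hrterm, hb0, hI0]
    have hreindex : ∑ r ∈ Finset.Icc 1 (q-1),
        Complex.exp (-(2*Real.pi*Complex.I*((q-r : ℕ):ℂ)*a/q))
          * ((1/(q:ℂ)) * ∑ k ∈ Finset.range q, (ζ (q-r))^(k+1) * f (x (k+1)))
        = ∑ s ∈ Finset.Icc 1 (q-1),
            Complex.exp (-(2*Real.pi*Complex.I*s*a/q))
              * ((1/(q:ℂ)) * ∑ k ∈ Finset.range q, (ζ s)^(k+1) * f (x (k+1))) := by
      apply Finset.sum_nbij' (i := fun r => q - r) (j := fun s => q - s)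
      · intro r hr
        obtain ⟨hr1, hr2⟩ := Finset.mem_Icc.mp hr
        exact Finset.mem_Icc.mpr ⟨by omega, by omega⟩
      · intro s hs
        obtain ⟨hs1, hs2⟩ := Finset.mem_Icc.mp hs
        exact Finset.mem_Icc.mpr ⟨by omega, by omega⟩
      · intro r hr
        obtain ⟨hr1, hr2⟩ := Finset.mem_Icc.mp hr
        omega
      · intro s hs
        obtain ⟨hs1, hs2⟩ := Finset.mem_Icc.mp hs
        omega
      · intro r hr
        rfl
    rw [hreindex]
    exact hmain.symm
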